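/- Let p be an odd prime and e1, e2, e3, e4 ≥ 0 integers. Let Γ = {(a,b) ∈ ℤ² : p^{e1} | a, p^{e2} | b, p^{e3} | (b+a), p^{e4} | (b-a)}. Then Γ is a sublattice of ℤ² of index p^{e_{σ(1)} + e_{σ(2)}}, where e_{σ(1)} ≥ e_{σ(2)} are the two largest among e1, e2, e3, e4. -/

import Mathlib

open AddSubgroup

def latSub (d1 d2 d3 d4 : ℤ) : AddSubgroup (ℤ × ℤ) where
  carrier := {x | d1 ∣ x.1 ∧ d2 ∣ x.2 ∧ d3 ∣ (x.2 + x.1) ∧ d4 ∣ (x.2 - x.1)}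
  zero_mem' := by simp
  add_mem' := by
    rintro x y ⟨h1, h2, h3, h4⟩ ⟨g1, g2, g3, g4⟩
    refine ⟨dvd_add h1 g1, dvd_add h2 g2, ?_, ?_⟩
    · have : (x + y).2 + (x + y).1 = (x.2 + x.1) + (y.2 + y.1) := by
        simp [Prod.fst_add, Prod.snd_add]; ring
      rw [this]; exact dvd_add h3 g3
    · have : (x + y).2 - (x + y).1 = (x.2 - x.1) + (y.2 - y.1) := by
        simp [Prod.fst_add, Prod.snd_add]; ring
      rw [this]; exact dvd_add h4 g4
  neg_mem' := by
    rintro x ⟨h1, h2, h3, h4⟩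
    refine ⟨h1.neg_right, h2.neg_right, ?_, ?_⟩
    · have : (-x).2 + (-x).1 = -(x.2 + x.1) := by simp; ring
      rw [this]; exact h3.neg_right
    · have : (-x).2 - (-x).1 = -(x.2 - x.1) := by simp; ring
      rw [this]; exact h4.neg_right

lemma mem_latSub {d1 d2 d3 d4 : ℤ} {x : ℤ × ℤ} :
    x ∈ latSub d1 d2 d3 d4 ↔ (d1 ∣ x.1 ∧ d2 ∣ x.2 ∧ d3 ∣ (x.2 + x.1) ∧ d4 ∣ (x.2 - x.1)) :=
  Iff.rfl

def shearP : (ℤ × ℤ) ≃+ (ℤ × ℤ) where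
  toFun x := (x.1, x.2 + x.1)
  invFun x := (x.1, x.2 - x.1)
  left_inv x := by cases x; simp
  right_inv x := by cases x; simp
  map_add' x y := by cases x; cases y; simp [Prod.ext_iff]; ring

def shearM : (ℤ × ℤ) ≃+ (ℤ × ℤ) where
  toFun x := (x.1, x.2 - x.1)
  invFun x := (x.1, x.2 + x.1)
  left_inv x := by cases x; simp
  right_inv x := by cases x; simp
  map_add' x y := by cases x; cases y; simp [Prod.ext_iff]; ring

lemma idx_prod (x y : ℤ) :
    ((zmultiples x).prod (zmultiples y)).index = x.natAbs * y.natAbs := by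
  rw [AddSubgroup.index_prod, Int.index_zmultiples, Int.index_zmultiples]

lemma idx_comap (φ : (ℤ × ℤ) ≃+ (ℤ × ℤ)) (H : AddSubgroup (ℤ × ℤ)) :
    (H.comap φ.toAddMonoidHom).index = H.index :=
  AddSubgroup.index_comap_of_surjective H φ.surjective

section cases
variable {pp : ℤ} {E M f1 f2 f3 : ℕ}

lemma caseA (h1E : f1 ≤ E) (h2E : f2 ≤ E) (h3E : f3 ≤ E)
    (h1M : f1 ≤ M) (h2M : f2 ≤ M) (h3M : f3 ≤ M) (hM : M = f1 ∨ M = f2 ∨ M = f3) :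
    latSub (pp ^ E) (pp ^ f1) (pp ^ f2) (pp ^ f3)
      = (zmultiples (pp ^ E)).prod (zmultiples (pp ^ M)) := by
  ext ⟨a, b⟩
  simp only [mem_latSub, AddSubgroup.mem_prod, Int.mem_zmultiples_iff]
  constructor
  · rintro ⟨d1, d2, d3, d4⟩
    refine ⟨d1, ?_⟩
    rcases hM with h | h | h
    · rw [h]; exact d2
    · rw [h]; have : b = (b + a) - a := by ring
      rw [this]; exact dvd_sub d3 ((pow_dvd_pow pp h2E).trans d1)
    · rw [h]; have : b = (b - a) + a := by ring
      rw [this]; exact dvd_add d4 ((pow_dvd_pow pp h3E).trans d1)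
  · rintro ⟨d1, d2⟩
    exact ⟨d1, (pow_dvd_pow pp h1M).trans d2,
      dvd_add ((pow_dvd_pow pp h2M).trans d2) ((pow_dvd_pow pp h2E).trans d1),
      dvd_sub ((pow_dvd_pow pp h3M).trans d2) ((pow_dvd_pow pp h3E).trans d1)⟩

lemma caseB (h1E : f1 ≤ E) (h2E : f2 ≤ E) (h3E : f3 ≤ E)
    (h1M : f1 ≤ M) (h2M : f2 ≤ M) (h3M : f3 ≤ M) (hM : M = f1 ∨ M = f2 ∨ M = f3) :
    latSub (pp ^ f1) (pp ^ E) (pp ^ f2) (pp ^ f3)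
      = (zmultiples (pp ^ M)).prod (zmultiples (pp ^ E)) := by
  ext ⟨a, b⟩
  simp only [mem_latSub, AddSubgroup.mem_prod, Int.mem_zmultiples_iff]
  constructor
  · rintro ⟨d1, d2, d3, d4⟩
    refine ⟨?_, d2⟩
    rcases hM with h | h | h
    · rw [h]; exact d1
    · rw [h]; have : a = (b + a) - b := by ring
      rw [this]; exact dvd_sub d3 ((pow_dvd_pow pp h2E).trans d2)
    · rw [h]; have : a = b - (b - a) := by ring
      rw [this]; exact dvd_sub ((pow_dvd_pow pp h3E).trans d2) d4
  · rintro ⟨d1, d2⟩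
    exact ⟨(pow_dvd_pow pp h1M).trans d1, d2,
      dvd_add ((pow_dvd_pow pp h2E).trans d2) ((pow_dvd_pow pp h2M).trans d1),
      dvd_sub ((pow_dvd_pow pp h3E).trans d2) ((pow_dvd_pow pp h3M).trans d1)⟩

lemma caseC (hcop : ∀ (k : ℕ) (a : ℤ), pp ^ k ∣ 2 * a → pp ^ k ∣ a)
    (h1E : f1 ≤ E) (h2E : f2 ≤ E) (h3E : f3 ≤ E)
    (h1M : f1 ≤ M) (h2M : f2 ≤ M) (h3M : f3 ≤ M) (hM : M = f1 ∨ M = f2 ∨ M = f3) :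
    latSub (pp ^ f1) (pp ^ f2) (pp ^ E) (pp ^ f3)
      = AddSubgroup.comap shearP.toAddMonoidHom
          ((zmultiples (pp ^ M)).prod (zmultiples (pp ^ E))) := by
  ext ⟨a, b⟩
  simp only [mem_latSub, AddSubgroup.mem_comap, AddSubgroup.mem_prod,
    Int.mem_zmultiples_iff, shearP, AddEquiv.coe_mk, Equiv.coe_fn_mk,
    AddMonoidHom.coe_coe]
  constructor
  · rintro ⟨d1, d2, d3, d4⟩
    refine ⟨?_, d3⟩
    rcases hM with h | h | h
    · rw [h]; exact d1
    · rw [h]; have : a = (b + a) - b := by ring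
      rw [this]; exact dvd_sub ((pow_dvd_pow pp h2E).trans d3) d2
    · rw [h]
      refine hcop f3 a ?_
      have : 2 * a = (b + a) - (b - a) := by ring
      rw [this]; exact dvd_sub ((pow_dvd_pow pp h3E).trans d3) d4
  · rintro ⟨dM, dE⟩
    refine ⟨(pow_dvd_pow pp h1M).trans dM, ?_, dE, ?_⟩
    · have : b = (b + a) - a := by ring
      rw [this]; exact dvd_sub ((pow_dvd_pow pp h2E).trans dE) ((pow_dvd_pow pp h2M).trans dM)
    · have : b - a = (b + a) - 2 * a := by ring
      rw [this]
      exact dvd_sub ((pow_dvd_pow pp h3E).trans dE)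
        (Dvd.dvd.mul_left ((pow_dvd_pow pp h3M).trans dM) 2)

lemma caseD (hcop : ∀ (k : ℕ) (a : ℤ), pp ^ k ∣ 2 * a → pp ^ k ∣ a)
    (h1E : f1 ≤ E) (h2E : f2 ≤ E) (h3E : f3 ≤ E)
    (h1M : f1 ≤ M) (h2M : f2 ≤ M) (h3M : f3 ≤ M) (hM : M = f1 ∨ M = f2 ∨ M = f3) :
    latSub (pp ^ f1) (pp ^ f2) (pp ^ f3) (pp ^ E)
      = AddSubgroup.comap shearM.toAddMonoidHom
          ((zmultiples (pp ^ M)).prod (zmultiples (pp ^ E))) := by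
  ext ⟨a, b⟩
  simp only [mem_latSub, AddSubgroup.mem_comap, AddSubgroup.mem_prod,
    Int.mem_zmultiples_iff, shearM, AddEquiv.coe_mk, Equiv.coe_fn_mk,
    AddMonoidHom.coe_coe]
  constructor
  · rintro ⟨d1, d2, d3, d4⟩
    refine ⟨?_, d4⟩
    rcases hM with h | h | h
    · rw [h]; exact d1
    · rw [h]; have : a = b - (b - a) := by ring
      rw [this]; exact dvd_sub d2 ((pow_dvd_pow pp h2E).trans d4)
    · rw [h]
      refine hcop f3 a ?_
      have : 2 * a = (b + a) - (b - a) := by ring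
      rw [this]; exact dvd_sub d3 ((pow_dvd_pow pp h3E).trans d4)
  · rintro ⟨dM, dE⟩
    refine ⟨(pow_dvd_pow pp h1M).trans dM, ?_, ?_, dE⟩
    · have : b = (b - a) + a := by ring
      rw [this]; exact dvd_add ((pow_dvd_pow pp h2E).trans dE) ((pow_dvd_pow pp h2M).trans dM)
    · have : b + a = (b - a) + 2 * a := by ring
      rw [this]
      exact dvd_add ((pow_dvd_pow pp h3E).trans dE)
        (Dvd.dvd.mul_left ((pow_dvd_pow pp h3M).trans dM) 2)

end cases

theorem stmt_6 (p : ℕ) (hp : p.Prime) (hodd : p ≠ 2) (e : Fin 4 → ℕ)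
    (σ : Equiv.Perm (Fin 4)) (hσ : ∀ i j : Fin 4, i ≤ j → e (σ j) ≤ e (σ i)) :
    (latSub ((p : ℤ) ^ e 0) ((p : ℤ) ^ e 1) ((p : ℤ) ^ e 2) ((p : ℤ) ^ e 3)).index =
      p ^ (e (σ 0) + e (σ 1)) := by
  have hcop : ∀ (k : ℕ) (a : ℤ), (p : ℤ) ^ k ∣ 2 * a → (p : ℤ) ^ k ∣ a := by
    intro k a h
    have hg : Nat.gcd p 2 = 1 := (Nat.coprime_primes hp Nat.prime_two).2 hodd
    have hc : IsCoprime ((p : ℤ) ^ k) 2 := by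
      refine IsCoprime.pow_left ?_
      rw [Int.isCoprime_iff_gcd_eq_one]
      show Int.gcd (p : ℤ) 2 = 1
      rw [Int.gcd]
      simpa using hg
    exact hc.dvd_of_dvd_mul_left h
  have hmax : ∀ i, e i ≤ e (σ 0) := by
    intro i
    have := hσ 0 (σ.symm i) (Fin.zero_le _)
    simpa using this
  have hsec : ∀ i, i ≠ σ 0 → e i ≤ e (σ 1) := by
    intro i hi
    have h0 : σ.symm i ≠ 0 := fun h => hi (by rw [← σ.apply_symm_apply i, h])
    have hv : (σ.symm i).val ≠ 0 := fun hv => h0 (Fin.ext (by simpa using hv))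
    have h1 : (1 : Fin 4) ≤ σ.symm i := by
      rw [Fin.le_def]
      omega
    simpa using hσ 1 (σ.symm i) h1
  have hne : σ 1 ≠ σ 0 := fun h => by
    have := σ.injective h
    exact absurd this (by decide)
  have hfin : ∀ i : Fin 4, i = 0 ∨ i = 1 ∨ i = 2 ∨ i = 3 := by decide
  have hnat : ∀ (E M : ℕ), ((p:ℤ)^E).natAbs * ((p:ℤ)^M).natAbs = p ^ (E + M) := by
    intro E M
    rw [pow_add]
    simp [Int.natAbs_pow]
  rcases hfin (σ 0) with h0 | h0 | h0 | h0 <;>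
    rcases hfin (σ 1) with h1 | h1 | h1 | h1 <;>
      simp only [h0, h1] at hmax hsec hne ⊢ <;>
      first
        | exact absurd rfl hne
        | (rw [caseA (pp := (p:ℤ))
              (hmax _) (hmax _) (hmax _)
              (hsec _ (by decide)) (hsec _ (by decide))
              (hsec _ (by decide)) (by tauto),
              idx_prod, hnat])
        | (rw [caseB (pp := (p:ℤ))
              (hmax _) (hmax _) (hmax _)
              (hsec _ (by decide)) (hsec _ (by decide))
              (hsec _ (by decide)) (by tauto),
              idx_prod, hnat, Nat.add_comm])
        | (rw [caseC (pp := (p:ℤ)) hcop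
              (hmax _) (hmax _) (hmax _)
              (hsec _ (by decide)) (hsec _ (by decide))
              (hsec _ (by decide)) (by tauto),
              idx_comap, idx_prod, hnat, Nat.add_comm])
        | (rw [caseD (pp := (p:ℤ)) hcop
              (hmax _) (hmax _) (hmax _)
              (hsec _ (by decide)) (hsec _ (by decide))
              (hsec _ (by decide)) (by tauto),
              idx_comap, idx_prod, hnat, Nat.add_comm])
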